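/- Let n ≥ 1 be a natural number, 0 ≤ ν ≤ n, λ = n − ν, κ = (n+1)/2, and let k be an even integer. With Γ_m(s) = π^{m(m−1)/4} · ∏_{i=0}^{m−1} Γ(s − i/2), the identity Γ_ν(s) · Γ_λ(s − ν/2 + k/2) · Γ_λ(κ − s − k/2) · Γ_ν(κ − s − λ/2) = (−1)^{n·k/2} · Γ_ν(s − k/2) · Γ_λ(s − ν/2) · Γ_λ(κ − s) · Γ_ν(κ − s − λ/2 + k/2) holds for every s ∈ ℂ. (This encodes the invariance G*_ν(s) = G*_λ(κ − s) of the Gamma factor G*_ν(s) = (−1)^{νk/2} · [Γ_ν(s)/Γ_ν(s − k/2)] · [Γ_λ(s − ν/2 + k/2)/Γ_λ(s − ν/2)] appearing in the functional equation of the constant term of the Siegel Eisenstein series with trivial character.) -/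

import Mathlib

open Complex

/-- The Siegel Gamma factor `Γ_m(s) = π^{m(m-1)/4} · ∏_{i=0}^{m-1} Γ(s - i/2)`. -/
noncomputable def GammaSiegel (m : ℕ) (s : ℂ) : ℂ :=
  (Real.pi : ℂ) ^ (((m * (m - 1) : ℕ) : ℂ) / 4) *
    ∏ i ∈ Finset.range m, Complex.Gamma (s - (i : ℂ) / 2)

lemma key_sin (z : ℂ) (j : ℤ) :
    Complex.sin (z + j * (Real.pi : ℂ)) = (-1) ^ j * Complex.sin z := by
  have h := Complex.sin_antiperiodic.add_int_mul_eq (x := z) j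
  simpa [Int.cast_negOnePow, zsmul_eq_mul, -Int.coe_negOnePow] using h

lemma key (z : ℂ) (j : ℤ) :
    Complex.Gamma (z + j) * Complex.Gamma (1 - (z + j)) =
      (-1) ^ j * (Complex.Gamma z * Complex.Gamma (1 - z)) := by
  rw [Complex.Gamma_mul_Gamma_one_sub, Complex.Gamma_mul_Gamma_one_sub]
  have h1 : (Real.pi : ℂ) * (z + j) = Real.pi * z + j * Real.pi := by ring
  rw [h1, key_sin]
  have hinv : ((-1 : ℂ) ^ j)⁻¹ = (-1) ^ j := by
    rw [← zpow_neg]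
    rcases Int.even_or_odd j with h | h
    · rw [(by simpa using h.neg : Even (-j)).neg_one_zpow, h.neg_one_zpow]
    · rw [(by simpa using h.neg : Odd (-j)).neg_one_zpow, h.neg_one_zpow]
  rw [div_mul_eq_div_div, div_eq_mul_inv (Real.pi:ℂ), hinv, mul_comm, mul_div_assoc]

lemma aux (m : ℕ) (a : ℂ) (j : ℤ) :
    (∏ i ∈ Finset.range m, Complex.Gamma (a + j - (i : ℂ) / 2)) *
      (∏ i ∈ Finset.range m, Complex.Gamma (1 - a + ((m : ℂ) - 1) / 2 - j - (i : ℂ) / 2)) =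
    ((-1 : ℂ) ^ j) ^ m * ((∏ i ∈ Finset.range m, Complex.Gamma (a - (i : ℂ) / 2)) *
      (∏ i ∈ Finset.range m, Complex.Gamma (1 - a + ((m : ℂ) - 1) / 2 - (i : ℂ) / 2))) := by
  rw [← Finset.prod_range_reflect (fun i => Complex.Gamma (1 - a + ((m : ℂ) - 1) / 2 - j - (i : ℂ) / 2)) m,
      ← Finset.prod_range_reflect (fun i => Complex.Gamma (1 - a + ((m : ℂ) - 1) / 2 - (i : ℂ) / 2)) m,
      ← Finset.prod_mul_distrib, ← Finset.prod_mul_distrib,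
      show ((-1:ℂ)^j)^m = ∏ _i ∈ Finset.range m, (-1:ℂ)^j by
        rw [Finset.prod_const, Finset.card_range],
      ← Finset.prod_mul_distrib]
  refine Finset.prod_congr rfl fun i hi => ?_
  rw [Finset.mem_range] at hi
  have hcast : ((m - 1 - i : ℕ) : ℂ) = (m : ℂ) - 1 - i := by
    have : ((m - 1 - i : ℕ) : ℤ) = (m : ℤ) - 1 - i := by omega
    push_cast at this ⊢
    exact_mod_cast this
  have e1 : (1 : ℂ) - a + ((m : ℂ) - 1) / 2 - j - ((m - 1 - i : ℕ) : ℂ) / 2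
      = 1 - ((a - (i : ℂ) / 2) + j) := by rw [hcast]; ring
  have e2 : (1 : ℂ) - a + ((m : ℂ) - 1) / 2 - ((m - 1 - i : ℕ) : ℂ) / 2
      = 1 - (a - (i : ℂ) / 2) := by rw [hcast]; ring
  have e3 : a + (j : ℂ) - (i : ℂ) / 2 = (a - (i : ℂ) / 2) + j := by ring
  rw [e1, e2, e3, key]

theorem stmt_13 (n ν : ℕ) (hn : 1 ≤ n) (hν : ν ≤ n) (k : ℤ) (hk : Even k) (s : ℂ) :
    GammaSiegel ν s * GammaSiegel (n - ν) (s - (ν : ℂ) / 2 + (k : ℂ) / 2) *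
        GammaSiegel (n - ν) (((n : ℂ) + 1) / 2 - s - (k : ℂ) / 2) *
        GammaSiegel ν (((n : ℂ) + 1) / 2 - s - ((n : ℂ) - (ν : ℂ)) / 2) =
      (-1 : ℂ) ^ ((n : ℤ) * (k / 2)) * GammaSiegel ν (s - (k : ℂ) / 2) *
        GammaSiegel (n - ν) (s - (ν : ℂ) / 2) *
        GammaSiegel (n - ν) (((n : ℂ) + 1) / 2 - s) *
        GammaSiegel ν (((n : ℂ) + 1) / 2 - s - ((n : ℂ) - (ν : ℂ)) / 2 + (k : ℂ) / 2) := by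
  set j : ℤ := k / 2 with hj
  have hk2 : (k : ℂ) / 2 = (j : ℂ) := by
    obtain ⟨r, rfl⟩ := hk
    have : (r + r) / 2 = r := by omega
    rw [hj, this]; push_cast; ring
  have hL : ((n - ν : ℕ) : ℂ) = (n : ℂ) - (ν : ℂ) := by
    have : ((n - ν : ℕ) : ℤ) = (n : ℤ) - ν := by omega
    exact_mod_cast this
  unfold GammaSiegel
  rw [hk2]
  have H1 := aux ν (s - j) j
  have H2 := aux (n - ν) (s - (ν : ℂ) / 2) j
  -- rewrite arguments of LHS/RHS products to match aux forms
  have eq1 : ∀ i ∈ Finset.range ν, Complex.Gamma (s - (i : ℂ) / 2)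
      = Complex.Gamma ((s - j) + j - (i : ℂ) / 2) := fun i _ => by ring_nf
  have eq4 : ∀ i ∈ Finset.range ν,
      Complex.Gamma (((n : ℂ) + 1) / 2 - s - ((n : ℂ) - (ν : ℂ)) / 2 - (i : ℂ) / 2)
      = Complex.Gamma (1 - (s - j) + ((ν : ℂ) - 1) / 2 - j - (i : ℂ) / 2) := fun i _ => by
    ring_nf
  have eq4' : ∀ i ∈ Finset.range ν,
      Complex.Gamma (((n : ℂ) + 1) / 2 - s - ((n : ℂ) - (ν : ℂ)) / 2 + (j : ℂ) - (i : ℂ) / 2)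
      = Complex.Gamma (1 - (s - j) + ((ν : ℂ) - 1) / 2 - (i : ℂ) / 2) := fun i _ => by
    ring_nf
  have eq1' : ∀ i ∈ Finset.range ν, Complex.Gamma (s - (j : ℂ) - (i : ℂ) / 2)
      = Complex.Gamma ((s - j) - (i : ℂ) / 2) := fun i _ => by ring_nf
  have eq2 : ∀ i ∈ Finset.range (n - ν),
      Complex.Gamma (s - (ν : ℂ) / 2 + (j : ℂ) - (i : ℂ) / 2)
      = Complex.Gamma ((s - (ν : ℂ) / 2) + j - (i : ℂ) / 2) := fun i _ => by ring_nf
  have eq3 : ∀ i ∈ Finset.range (n - ν),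
      Complex.Gamma (((n : ℂ) + 1) / 2 - s - (j : ℂ) - (i : ℂ) / 2)
      = Complex.Gamma (1 - (s - (ν : ℂ) / 2) + (((n - ν : ℕ) : ℂ) - 1) / 2 - j - (i : ℂ) / 2) :=
    fun i _ => by rw [hL]; ring_nf
  have eq3' : ∀ i ∈ Finset.range (n - ν),
      Complex.Gamma (((n : ℂ) + 1) / 2 - s - (i : ℂ) / 2)
      = Complex.Gamma (1 - (s - (ν : ℂ) / 2) + (((n - ν : ℕ) : ℂ) - 1) / 2 - (i : ℂ) / 2) :=
    fun i _ => by rw [hL]; ring_nf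
  rw [Finset.prod_congr rfl eq1, Finset.prod_congr rfl eq2, Finset.prod_congr rfl eq3,
      Finset.prod_congr rfl eq4, Finset.prod_congr rfl eq1', Finset.prod_congr rfl eq3',
      Finset.prod_congr rfl eq4']
  have hsign : (-1 : ℂ) ^ ((n : ℤ) * j) = ((-1 : ℂ) ^ j) ^ ν * ((-1 : ℂ) ^ j) ^ (n - ν) := by
    rw [← pow_add, Nat.add_sub_cancel' hν, ← zpow_natCast ((-1 : ℂ) ^ j) n, ← zpow_mul]
    ring_nf
  rw [hsign]
  linear_combination
      (((Real.pi : ℂ) ^ (((ν * (ν - 1) : ℕ) : ℂ) / 4)) ^ 2 *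
        ((Real.pi : ℂ) ^ ((((n - ν) * (n - ν - 1) : ℕ) : ℂ) / 4)) ^ 2 *
        ((∏ x ∈ Finset.range (n - ν), Complex.Gamma (s - (ν : ℂ) / 2 + (j : ℂ) - (x : ℂ) / 2)) *
          (∏ x ∈ Finset.range (n - ν),
            Complex.Gamma (1 - (s - (ν : ℂ) / 2) + (((n - ν : ℕ) : ℂ) - 1) / 2 - (j : ℂ) - (x : ℂ) / 2)))) * H1
    + (((Real.pi : ℂ) ^ (((ν * (ν - 1) : ℕ) : ℂ) / 4)) ^ 2 *
        ((Real.pi : ℂ) ^ ((((n - ν) * (n - ν - 1) : ℕ) : ℂ) / 4)) ^ 2 *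
        ((-1 : ℂ) ^ j) ^ ν *
        ((∏ x ∈ Finset.range ν, Complex.Gamma (s - (j : ℂ) - (x : ℂ) / 2)) *
          (∏ x ∈ Finset.range ν,
            Complex.Gamma (1 - (s - (j : ℂ)) + ((ν : ℂ) - 1) / 2 - (x : ℂ) / 2)))) * H2
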